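/- Assume ∫_{−∞}^∞ q(t) dt = ∞ and d₀ := sup_{x∈ℝ} d(x) < ∞. Then for every λ ∈ (0,∞) and every x ∈ ℝ: ∫_x^∞ exp(−∫_x^t (q(ξ) + λ) dξ) dt ≤ ( λ + e^{−2−2λd₀} d₀^{−1} )^{−1}; in particular sup_{x∈ℝ} ∫_x^∞ exp(−∫_x^t (q(ξ) + λ) dξ) dt < 1/λ. -/

import Mathlib

open MeasureTheory Filter Topology
open scoped ENNReal

noncomputable def dq (q : ℝ → ℝ) (x : ℝ) : ℝ :=
  sInf {d : ℝ | 0 < d ∧ ∫ t in x - d..x + d, q t = 2}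

lemma hII {q : ℝ → ℝ} (hqloc : LocallyIntegrable q volume) (a b : ℝ) :
    IntervalIntegrable q volume a b :=
  intervalIntegrable_iff.2 ((hqloc.integrableOn_isCompact isCompact_uIcc).mono_set
    Set.Ioc_subset_Icc_self)

lemma gcont {q : ℝ → ℝ} (hqloc : LocallyIntegrable q volume) (x : ℝ) :
    Continuous (fun d : ℝ => ∫ t in x - d..x + d, q t) := by
  have h := intervalIntegral.continuous_primitive (fun a b => hII hqloc a b) 0
  have : (fun d : ℝ => ∫ t in x - d..x + d, q t) =
      fun d => (∫ t in (0:ℝ)..(x+d), q t) - ∫ t in (0:ℝ)..(x-d), q t := by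
    funext d
    rw [← intervalIntegral.integral_add_adjacent_intervals (hII hqloc 0 (x-d)) (hII hqloc (x-d) (x+d))]
    ring
  rw [this]
  exact (h.comp (continuous_const.add continuous_id)).sub
    (h.comp (continuous_const.sub continuous_id))

lemma Sne {q : ℝ → ℝ} (hq : ∀ x, 0 ≤ q x) (hqloc : LocallyIntegrable q volume)
    (hqint : ∫⁻ x : ℝ, ENNReal.ofReal (q x) = ⊤) (x : ℝ) :
    {d : ℝ | 0 < d ∧ ∫ t in x - d..x + d, q t = 2}.Nonempty := by
  -- first find d with integral ≥ 2
  obtain ⟨n, hn⟩ : ∃ n : ℕ, 2 ≤ ∫ t in x - n..x + n, q t := by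
    by_contra hcon
    push_neg at hcon
    set f : ℕ → ℝ → ℝ≥0∞ := fun n => (Set.Icc (x - n) (x + n)).indicator
      (fun t => ENNReal.ofReal (q t)) with hf
    have hmeas : ∀ n, AEMeasurable (f n) volume := fun n =>
      (ENNReal.measurable_ofReal.comp_aemeasurable
        hqloc.aestronglyMeasurable.aemeasurable).indicator measurableSet_Icc
    have hmono : ∀ t, Monotone fun n => f n t := by
      intro t m n hmn
      have hc : (m:ℝ) ≤ n := Nat.cast_le.2 hmn
      exact Set.indicator_le_indicator_of_subset
        (Set.Icc_subset_Icc (by linarith) (by linarith)) (fun _ => zero_le) t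
    have hsup : ∀ t, (⨆ n, f n t) = ENNReal.ofReal (q t) := by
      intro t
      apply le_antisymm
      · exact iSup_le fun n => Set.indicator_le_self _ _ t
      · obtain ⟨n, hn⟩ := exists_nat_ge (max (x - t) (t - x))
        have h1 : x - t ≤ n := le_trans (le_max_left _ _) hn
        have h2 : t - x ≤ n := le_trans (le_max_right _ _) hn
        have hmem : t ∈ Set.Icc (x - (n:ℝ)) (x + n) := ⟨by linarith, by linarith⟩
        refine le_iSup_of_le n ?_
        rw [hf]; simp only [Set.indicator_of_mem hmem]; exact le_rfl
    have key := lintegral_iSup' hmeas (Filter.Eventually.of_forall hmono)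
    simp_rw [hsup] at key
    rw [hqint] at key
    have hbd : ∀ n : ℕ, (∫⁻ t, f n t) ≤ ENNReal.ofReal 2 := by
      intro n
      have hint : IntegrableOn q (Set.Icc (x - n) (x + n)) volume :=
        hqloc.integrableOn_isCompact isCompact_Icc
      have : (∫⁻ t, f n t) = ENNReal.ofReal (∫ t in Set.Icc (x - (n:ℝ)) (x + n), q t) := by
        simp only [hf]
        rw [lintegral_indicator measurableSet_Icc _,
          ofReal_integral_eq_lintegral_ofReal hint
            (Filter.Eventually.of_forall fun t => hq t)]
      rw [this]
      apply ENNReal.ofReal_le_ofReal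
      have hle : x - (n:ℝ) ≤ x + n := by have := Nat.cast_nonneg (α := ℝ) n; linarith
      rw [MeasureTheory.integral_Icc_eq_integral_Ioc,
        ← intervalIntegral.integral_of_le hle]
      exact (hcon n).le
    have htop : (⊤:ℝ≥0∞) ≤ ENNReal.ofReal 2 := by rw [key]; exact iSup_le hbd
    exact ENNReal.ofReal_ne_top (top_le_iff.1 htop)
  have hle : (0:ℝ) ≤ n := Nat.cast_nonneg n
  have hg0 : ∫ t in x - (0:ℝ)..x + 0, q t = 0 := by
    rw [sub_zero, add_zero, intervalIntegral.integral_same]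
  obtain ⟨c, hc, hgc⟩ := intermediate_value_Icc hle ((gcont hqloc x).continuousOn)
    (Set.mem_Icc.2 ⟨by rw [hg0]; norm_num, hn⟩)
  refine ⟨c, lt_of_le_of_ne hc.1 ?_, hgc⟩
  rintro rfl
  simp only [hg0] at hgc
  norm_num at hgc

lemma dq_mem {q : ℝ → ℝ} (hq : ∀ x, 0 ≤ q x) (hqloc : LocallyIntegrable q volume)
    (hqint : ∫⁻ x : ℝ, ENNReal.ofReal (q x) = ⊤) (x : ℝ) :
    0 < dq q x ∧ ∫ t in x - dq q x..x + dq q x, q t = 2 := by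
  set S := {d : ℝ | 0 < d ∧ ∫ t in x - d..x + d, q t = 2} with hS
  have hne := Sne hq hqloc hqint x
  have hbdd : BddBelow S := ⟨0, fun d hd => hd.1.le⟩
  have hcl : closure S ⊆ {d : ℝ | 0 ≤ d ∧ ∫ t in x - d..x + d, q t = 2} := by
    apply closure_minimal
    · exact fun d hd => ⟨hd.1.le, hd.2⟩
    · exact (isClosed_le continuous_const continuous_id).inter
        (isClosed_eq (gcont hqloc x) continuous_const)
  have hmem : sInf S ∈ closure S := csInf_mem_closure hne hbdd
  obtain ⟨h1, h2⟩ := hcl hmem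
  refine ⟨lt_of_le_of_ne h1 ?_, h2⟩
  rintro h
  rw [show dq q x = sInf S from rfl] at h
  rw [← h, sub_zero, add_zero, intervalIntegral.integral_same] at h2
  norm_num at h2

lemma int_mono {q : ℝ → ℝ} (hq : ∀ x, 0 ≤ q x) (hqloc : LocallyIntegrable q volume)
    {a b c : ℝ} (h : b ≤ c) : ∫ t in a..b, q t ≤ ∫ t in a..c, q t := by
  rw [← intervalIntegral.integral_add_adjacent_intervals (hII hqloc a b) (hII hqloc b c)]
  have : (0:ℝ) ≤ ∫ t in b..c, q t := intervalIntegral.integral_nonneg h (fun u _ => hq u)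
  linarith

lemma two_le {q : ℝ → ℝ} (hq : ∀ x, 0 ≤ q x) (hqloc : LocallyIntegrable q volume)
    (hqint : ∫⁻ x : ℝ, ENNReal.ofReal (q x) = ⊤) (hd0 : BddAbove (Set.range (dq q)))
    (x : ℝ) : 2 ≤ ∫ t in x..(x + 2 * (⨆ z : ℝ, dq q z)), q t := by
  set d0 := ⨆ z : ℝ, dq q z with hd0def
  set y := x + d0 with hy
  obtain ⟨hdy, hgy⟩ := dq_mem hq hqloc hqint y
  have hdyle : dq q y ≤ d0 := le_ciSup hd0 y
  have h1 : x ≤ y - dq q y := by rw [hy]; linarith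
  have h2 : y + dq q y ≤ x + 2 * d0 := by rw [hy]; linarith
  calc (2:ℝ) = ∫ t in y - dq q y..y + dq q y, q t := hgy.symm
    _ ≤ ∫ t in y - dq q y..x + 2 * d0, q t := int_mono hq hqloc h2
    _ ≤ ∫ t in x..x + 2 * d0, q t := by
        rw [← intervalIntegral.integral_add_adjacent_intervals
          (hII hqloc x (y - dq q y)) (hII hqloc (y - dq q y) (x + 2*d0))]
        have : (0:ℝ) ≤ ∫ t in x..(y - dq q y), q t := intervalIntegral.integral_nonneg h1 (fun u _ => hq u)
        linarith

lemma two_n_le {q : ℝ → ℝ} (hq : ∀ x, 0 ≤ q x) (hqloc : LocallyIntegrable q volume)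
    (hqint : ∫⁻ x : ℝ, ENNReal.ofReal (q x) = ⊤) (hd0 : BddAbove (Set.range (dq q)))
    (x : ℝ) (n : ℕ) :
    2 * (n:ℝ) ≤ ∫ t in x..(x + 2 * n * (⨆ z : ℝ, dq q z)), q t := by
  set d0 := ⨆ z : ℝ, dq q z with hd0def
  induction n with
  | zero => simp
  | succ n ih =>
    have key := two_le hq hqloc hqint hd0 (x + 2 * n * d0)
    have hsplit := intervalIntegral.integral_add_adjacent_intervals
      (hII hqloc x (x + 2*n*d0)) (hII hqloc (x + 2*n*d0) (x + 2*(n+1)*d0))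
    have : x + 2*n*d0 + 2*d0 = x + 2*(n+1)*d0 := by ring
    rw [this] at key
    push_cast
    rw [show x + 2 * ((n:ℝ)+1) * d0 = x + 2*(n+1)*d0 by ring, ← hsplit]
    push_cast at ih
    linarith

lemma key_ineq (lam d0 : ℝ) (hl : 0 < lam) (hd : 0 < d0) :
    lam⁻¹ * (1 - Real.exp (-(2*lam*d0))) * (1 - Real.exp (-2 - 2*lam*d0))⁻¹ ≤
      (lam + Real.exp (-2 - 2*lam*d0) / d0)⁻¹ := by
  set u := 2*lam*d0 with hu
  have hu0 : 0 < u := by positivity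
  set s := Real.exp (-u) with hs
  set r := Real.exp (-2 - u) with hrdef
  have hspos : 0 < s := Real.exp_pos _
  have hrpos : 0 < r := Real.exp_pos _
  have hs1 : s < 1 := Real.exp_lt_one_iff.2 (by linarith)
  have hr1 : r < 1 := Real.exp_lt_one_iff.2 (by linarith)
  have hr : r = Real.exp (-2) * s := by rw [hrdef, hs, ← Real.exp_add]; ring_nf
  have h1su : 1 - s ≤ u := by nlinarith [Real.add_one_le_exp (-u)]
  have h3 : (3:ℝ) ≤ Real.exp 2 := by nlinarith [Real.add_one_le_exp (2:ℝ)]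
  have he2 : 3 * Real.exp (-2:ℝ) ≤ 1 := by
    rw [Real.exp_neg, ← div_eq_mul_inv]
    exact (div_le_one (Real.exp_pos 2)).2 h3
  have hcore : (1 - s) * r ≤ lam * d0 * (s - r) := by
    have h2 : (1 - s) * (Real.exp (-2:ℝ) * s) ≤ u * (Real.exp (-2:ℝ) * s) :=
      mul_le_mul_of_nonneg_right h1su (by positivity)
    have h4 : u * (Real.exp (-2:ℝ) * s) ≤ lam * d0 * (s * (1 - Real.exp (-2:ℝ))) := by
      have hpr := mul_nonneg (mul_pos (mul_pos hl hd) hspos).le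
        (by linarith : (0:ℝ) ≤ 1 - 3*Real.exp (-2:ℝ))
      rw [hu]; nlinarith [hpr]
    have h5 : lam * d0 * (s - r) = lam * d0 * (s * (1 - Real.exp (-2:ℝ))) := by
      rw [hr]; ring
    rw [h5, hr]
    linarith
  have goal1 : (1 - s) * (lam * d0 + r) ≤ lam * (1 - r) * d0 := by nlinarith [hcore]
  have hB : 0 < lam + r / d0 := by positivity
  have hABle : lam⁻¹ * (1 - s) * (1 - r)⁻¹ * (lam + r / d0) ≤ 1 := by
    rw [show lam⁻¹ * (1 - s) * (1 - r)⁻¹ * (lam + r / d0)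
        = ((1-s)*(lam*d0 + r)) / (lam*(1-r)*d0) from by field_simp]
    exact (div_le_one (mul_pos (mul_pos hl (by linarith)) hd)).2 goal1
  calc lam⁻¹ * (1 - s) * (1 - r)⁻¹
      = (lam⁻¹ * (1 - s) * (1 - r)⁻¹ * (lam + r / d0)) / (lam + r / d0) :=
        (mul_div_cancel_right₀ _ hB.ne').symm
    _ ≤ 1 / (lam + r / d0) := by gcongr
    _ = (lam + r / d0)⁻¹ := one_div _

lemma exp_integral (c lam x a b : ℝ) (hl : 0 < lam) :
    ∫ t in a..b, Real.exp (-c - lam*(t-x)) =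
      lam⁻¹ * (Real.exp (-c - lam*(a-x)) - Real.exp (-c - lam*(b-x))) := by
  have hcont : Continuous fun t : ℝ => Real.exp (-c - lam*(t-x)) := by continuity
  have hd : ∀ t ∈ Set.uIcc a b, HasDerivAt
      (fun t => -lam⁻¹ * Real.exp (-c - lam*(t-x))) (Real.exp (-c - lam*(t-x))) t := by
    intro t _
    have h0 : HasDerivAt (fun t : ℝ => -c - lam*(t-x)) (-lam) t := by
      have h0' : HasDerivAt (fun t : ℝ => (-lam)*t + (lam*x - c)) (-lam) t := by
        simpa using ((hasDerivAt_id t).const_mul (-lam)).add_const (lam*x - c)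
      convert h0' using 2 with t
      ring
    have h2 := (h0.exp).const_mul (-lam⁻¹)
    refine h2.congr_deriv ?_
    rw [mul_comm (Real.exp _) (-lam), ← mul_assoc, neg_mul_neg, inv_mul_cancel₀ hl.ne', one_mul]
  rw [intervalIntegral.integral_eq_sub_of_hasDerivAt hd (hcont.intervalIntegrable a b)]
  field_simp
  ring

lemma piece {q : ℝ → ℝ} (hq : ∀ x, 0 ≤ q x) (hqloc : LocallyIntegrable q volume)
    (hqint : ∫⁻ x : ℝ, ENNReal.ofReal (q x) = ⊤) (hd0 : BddAbove (Set.range (dq q)))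
    (lam : ℝ) (hlam : 0 < lam) (hd0pos : 0 < ⨆ z : ℝ, dq q z) (x : ℝ) (n : ℕ) :
    (∫⁻ t in Set.Ico (x + 2*(n:ℝ)*(⨆ z : ℝ, dq q z)) (x + 2*((n:ℝ)+1)*(⨆ z : ℝ, dq q z)),
        ENNReal.ofReal (Real.exp (-∫ ξ in x..t, (q ξ + lam)))) ≤
      ENNReal.ofReal (lam⁻¹ * (1 - Real.exp (-(2*lam*(⨆ z : ℝ, dq q z)))) *
        (Real.exp (-2 - 2*lam*(⨆ z : ℝ, dq q z)))^n) := by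
  set d0 := ⨆ z : ℝ, dq q z with hd0def
  set a := x + 2*(n:ℝ)*d0 with ha
  set b := x + 2*((n:ℝ)+1)*d0 with hb
  have hab : a ≤ b := by rw [ha, hb]; nlinarith
  have hcont : Continuous fun t : ℝ => Real.exp (-(2*(n:ℝ)) - lam*(t-x)) := by continuity
  have step1 : ∀ t ∈ Set.Ico a b,
      ENNReal.ofReal (Real.exp (-∫ ξ in x..t, (q ξ + lam))) ≤
        ENNReal.ofReal (Real.exp (-(2*(n:ℝ)) - lam*(t-x))) := by
    intro t ht
    apply ENNReal.ofReal_le_ofReal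
    apply Real.exp_le_exp.2
    rw [neg_sub_left, neg_le_neg_iff]
    have hsplit : ∫ ξ in x..t, (q ξ + lam) = (∫ ξ in x..t, q ξ) + (t - x) * lam := by
      rw [intervalIntegral.integral_add (hII hqloc x t) (intervalIntegrable_const),
        intervalIntegral.integral_const, smul_eq_mul]
    have h2n : 2*(n:ℝ) ≤ ∫ ξ in x..t, q ξ :=
      le_trans (two_n_le hq hqloc hqint hd0 x n) (int_mono hq hqloc ht.1)
    rw [hsplit]
    linarith
  have hmeas : Measurable fun t : ℝ => ENNReal.ofReal (Real.exp (-(2*(n:ℝ)) - lam*(t-x))) :=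
    ENNReal.measurable_ofReal.comp hcont.measurable
  calc (∫⁻ t in Set.Ico a b, ENNReal.ofReal (Real.exp (-∫ ξ in x..t, (q ξ + lam))))
      ≤ ∫⁻ t in Set.Ico a b, ENNReal.ofReal (Real.exp (-(2*(n:ℝ)) - lam*(t-x))) :=
        setLIntegral_mono hmeas step1
    _ = ENNReal.ofReal (∫ t in Set.Ico a b, Real.exp (-(2*(n:ℝ)) - lam*(t-x))) :=
        (ofReal_integral_eq_lintegral_ofReal
          ((hcont.integrableOn_Icc).mono_set Set.Ico_subset_Icc_self)
          (Filter.Eventually.of_forall fun t => (Real.exp_pos _).le)).symm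
    _ = ENNReal.ofReal (∫ t in a..b, Real.exp (-(2*(n:ℝ)) - lam*(t-x))) := by
        rw [MeasureTheory.integral_Ico_eq_integral_Ioo, intervalIntegral.integral_of_le hab,
          MeasureTheory.integral_Ioc_eq_integral_Ioo]
    _ ≤ ENNReal.ofReal (lam⁻¹ * (1 - Real.exp (-(2*lam*d0))) * (Real.exp (-2 - 2*lam*d0))^n) := by
        rw [exp_integral _ _ _ _ _ hlam]
        apply ENNReal.ofReal_le_ofReal
        have e1 : -(2*(n:ℝ)) - lam*(a-x) = n * (-2 - 2*lam*d0) := by rw [ha]; ring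
        have e2 : -(2*(n:ℝ)) - lam*(b-x) = n * (-2 - 2*lam*d0) + (-(2*lam*d0)) := by
          rw [hb]; ring
        rw [e1, e2, Real.exp_add, Real.exp_nat_mul]
        ring_nf
        exact le_rfl

theorem stmt18 (q : ℝ → ℝ) (hq : ∀ x, 0 ≤ q x)
    (hqloc : LocallyIntegrable q volume)
    (hqint : ∫⁻ x : ℝ, ENNReal.ofReal (q x) = ⊤)
    (hd0 : BddAbove (Set.range (dq q)))
    (lam : ℝ) (hlam : 0 < lam) :
    (∀ x : ℝ,
      (∫⁻ t in Set.Ioi x, ENNReal.ofReal (Real.exp (-∫ ξ in x..t, (q ξ + lam)))) ≤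
        ENNReal.ofReal
          ((lam + Real.exp (-2 - 2 * lam * (⨆ z : ℝ, dq q z)) /
              (⨆ z : ℝ, dq q z))⁻¹)) ∧
    (⨆ x : ℝ,
        ∫⁻ t in Set.Ioi x, ENNReal.ofReal (Real.exp (-∫ ξ in x..t, (q ξ + lam)))) <
      ENNReal.ofReal (1 / lam) := by
  set d0 := ⨆ z : ℝ, dq q z with hd0def
  have hd0pos : 0 < d0 :=
    lt_of_lt_of_le (dq_mem hq hqloc hqint 0).1 (le_ciSup hd0 0)
  set r := Real.exp (-2 - 2*lam*d0) with hr
  have hrpos : 0 < r := Real.exp_pos _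
  have hr1 : r < 1 := Real.exp_lt_one_iff.2 (by nlinarith)
  set K := lam⁻¹ * (1 - Real.exp (-(2*lam*d0))) with hK
  have hKnn : 0 ≤ K := by
    have : Real.exp (-(2*lam*d0)) ≤ 1 := Real.exp_le_one_iff.2 (by nlinarith)
    have h2 : 0 ≤ lam⁻¹ := by positivity
    nlinarith
  have main : ∀ x : ℝ,
      (∫⁻ t in Set.Ioi x, ENNReal.ofReal (Real.exp (-∫ ξ in x..t, (q ξ + lam)))) ≤
        ENNReal.ofReal ((lam + r / d0)⁻¹) := by
    intro x
    have hsub : Set.Ioi x ⊆ ⋃ n : ℕ, Set.Ico (x + 2*(n:ℝ)*d0) (x + 2*((n:ℝ)+1)*d0) := by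
      intro t ht
      simp only [Set.mem_Ioi] at ht
      set n := ⌊(t - x) / (2*d0)⌋₊ with hn
      have h2d : (0:ℝ) < 2*d0 := by linarith
      have hnn : (0:ℝ) ≤ (t-x)/(2*d0) := div_nonneg (by linarith) h2d.le
      have h1 : (n:ℝ) ≤ (t-x)/(2*d0) := Nat.floor_le hnn
      have h2 : (t-x)/(2*d0) < n+1 := Nat.lt_floor_add_one _
      have h1' : (n:ℝ) * (2*d0) ≤ t - x := (le_div_iff₀ h2d).1 h1
      have h2' : t - x < ((n:ℝ)+1) * (2*d0) := (div_lt_iff₀ h2d).1 h2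
      exact Set.mem_iUnion.2 ⟨n, by constructor <;> [linarith; linarith]⟩
    calc (∫⁻ t in Set.Ioi x, ENNReal.ofReal (Real.exp (-∫ ξ in x..t, (q ξ + lam))))
        ≤ ∫⁻ t in ⋃ n : ℕ, Set.Ico (x + 2*(n:ℝ)*d0) (x + 2*((n:ℝ)+1)*d0),
            ENNReal.ofReal (Real.exp (-∫ ξ in x..t, (q ξ + lam))) :=
          lintegral_mono_set hsub
      _ ≤ ∑' n : ℕ, ∫⁻ t in Set.Ico (x + 2*(n:ℝ)*d0) (x + 2*((n:ℝ)+1)*d0),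
            ENNReal.ofReal (Real.exp (-∫ ξ in x..t, (q ξ + lam))) :=
          lintegral_iUnion_le _ _
      _ ≤ ∑' n : ℕ, ENNReal.ofReal (K * r^n) :=
          ENNReal.tsum_le_tsum (fun n => piece hq hqloc hqint hd0 lam hlam hd0pos x n)
      _ = ENNReal.ofReal (∑' n : ℕ, K * r^n) :=
          (ENNReal.ofReal_tsum_of_nonneg (fun n => by positivity)
            ((summable_geometric_of_lt_one hrpos.le hr1).mul_left K)).symm
      _ = ENNReal.ofReal (K * (1 - r)⁻¹) := by
          rw [tsum_mul_left, tsum_geometric_of_lt_one hrpos.le hr1]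
      _ ≤ ENNReal.ofReal ((lam + r / d0)⁻¹) := by
          apply ENNReal.ofReal_le_ofReal
          have := key_ineq lam d0 hlam hd0pos
          rw [hK, hr]
          linarith [key_ineq lam d0 hlam hd0pos]
  refine ⟨main, ?_⟩
  have hlt : (lam + r / d0)⁻¹ < 1 / lam := by
    rw [one_div]
    exact inv_strictAnti₀ hlam (lt_add_of_pos_right lam (by positivity))
  exact lt_of_le_of_lt (iSup_le main)
    ((ENNReal.ofReal_lt_ofReal_iff (by positivity)).2 hlt)
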